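/- Let V be a finite-dimensional real inner product space, let D be a subspace of V, and let J : V →ₗ[ℝ] V be a linear map such that J maps D into D, J vanishes on the orthogonal complement Dᗮ, J(J x) = −x for all x ∈ D, and ⟪J x, J y⟫ = ⟪x, y⟫ for all x, y ∈ D. Then J³ = −J, J is skew-adjoint on all of V (⟪J x, y⟫ = −⟪x, J y⟫ for all x, y ∈ V), and J ∘ J = −P_D, where P_D is the orthogonal projection of V onto D. (A compatible almost complex structure on a subbundle D extends uniquely, by zero on Dᗮ, to a metric f-structure with image D; this is the second part of Theorem 3.1.) -/

import Mathlib

open scoped RealInnerProductSpace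

/-- A compatible almost complex structure on a subspace `D`, extended by zero on `Dᗮ`,
is a metric f-structure: it satisfies `J³ = -J`, is skew-adjoint, and `J ∘ J` is minus
the orthogonal projection onto `D`. -/
theorem metric_f_structure_of_extended_complex_structure
    {V : Type*} [NormedAddCommGroup V] [InnerProductSpace ℝ V] [FiniteDimensional ℝ V]
    (D : Submodule ℝ V) (J : V →ₗ[ℝ] V)
    (hmap : ∀ x ∈ D, J x ∈ D)
    (hzero : ∀ x ∈ Dᗮ, J x = 0)
    (hsq : ∀ x ∈ D, J (J x) = -x)
    (hiso : ∀ x ∈ D, ∀ y ∈ D, ⟪J x, J y⟫ = ⟪x, y⟫) :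
    (∀ x : V, J (J (J x)) = -(J x)) ∧
    (∀ x y : V, ⟪J x, y⟫ = -⟪x, J y⟫) ∧
    (∀ x : V, J (J x) = -((Submodule.orthogonalProjection D x : V))) := by
  -- decomposition lemma
  have hdec : ∀ x : V, J x = J (Submodule.orthogonalProjection D x : V) := by
    intro x
    have h : x = (Submodule.orthogonalProjection D x : V) + (Submodule.orthogonalProjection Dᗮ x : V) :=
      (Submodule.starProjection_add_starProjection_orthogonal (K := D) x).symm
    have hq : (Submodule.orthogonalProjection Dᗮ x : V) ∈ Dᗮ := (Submodule.orthogonalProjection Dᗮ x).2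
    calc J x = J ((Submodule.orthogonalProjection D x : V) + (Submodule.orthogonalProjection Dᗮ x : V)) := by
            rw [← h]
      _ = J (Submodule.orthogonalProjection D x : V) + J (Submodule.orthogonalProjection Dᗮ x : V) := map_add J _ _
      _ = J (Submodule.orthogonalProjection D x : V) := by rw [hzero _ hq, add_zero]
  have hJJ : ∀ x : V, J (J x) = -((Submodule.orthogonalProjection D x : V)) := by
    intro x
    rw [hdec x, hsq _ (Submodule.orthogonalProjection D x).2]
  refine ⟨?_, ?_, hJJ⟩
  · intro x
    have hJxD : J x ∈ D := by
      rw [hdec x]; exact hmap _ (Submodule.orthogonalProjection D x).2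
    rw [hJJ x, hdec x, map_neg]
  · intro x y
    have hx : x = (Submodule.orthogonalProjection D x : V) + (Submodule.orthogonalProjection Dᗮ x : V) :=
      (Submodule.starProjection_add_starProjection_orthogonal (K := D) x).symm
    have hy : y = (Submodule.orthogonalProjection D y : V) + (Submodule.orthogonalProjection Dᗮ y : V) :=
      (Submodule.starProjection_add_starProjection_orthogonal (K := D) y).symm
    set p := (Submodule.orthogonalProjection D x : V) with hp
    set p' := (Submodule.orthogonalProjection D y : V) with hp'
    set q := (Submodule.orthogonalProjection Dᗮ x : V) with hq
    set q' := (Submodule.orthogonalProjection Dᗮ y : V) with hq'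
    have hpD : p ∈ D := (Submodule.orthogonalProjection D x).2
    have hp'D : p' ∈ D := (Submodule.orthogonalProjection D y).2
    have hqD : q ∈ Dᗮ := (Submodule.orthogonalProjection Dᗮ x).2
    have hq'D : q' ∈ Dᗮ := (Submodule.orthogonalProjection Dᗮ y).2
    have hJx : J x = J p := hdec x
    have hJy : J y = J p' := hdec y
    have hJpD : J p ∈ D := hmap _ hpD
    have hJp'D : J p' ∈ D := hmap _ hp'D
    -- ⟪J p, p'⟫ = -⟪p, J p'⟫
    have key : ⟪J p, p'⟫ = -⟪p, J p'⟫ := by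
      have : p' = -(J (J p')) := by rw [hsq _ hp'D, neg_neg]
      calc ⟪J p, p'⟫ = ⟪J p, -(J (J p'))⟫ := by rw [← this]
        _ = -⟪J p, J (J p')⟫ := by rw [inner_neg_right]
        _ = -⟪p, J p'⟫ := by rw [hiso _ hpD _ hJp'D]
    calc ⟪J x, y⟫ = ⟪J p, p' + q'⟫ := by rw [hJx, ← hy]
      _ = ⟪J p, p'⟫ + ⟪J p, q'⟫ := inner_add_right _ _ _
      _ = ⟪J p, p'⟫ := by rw [(hq'D (J p) hJpD : ⟪J p, q'⟫ = 0), add_zero]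
      _ = -⟪p, J p'⟫ := key
      _ = -(⟪p, J p'⟫ + ⟪q, J p'⟫) := by
          rw [show ⟪q, J p'⟫ = (0:ℝ) by rw [real_inner_comm]; exact hqD _ hJp'D, add_zero]
      _ = -⟪p + q, J p'⟫ := by rw [inner_add_left]
      _ = -⟪x, J y⟫ := by rw [← hx, hJy]
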